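/- For odd k ≥ 3, let B be the (2k-1)×(2k-1) array with B_{i,j} ≡ A_{i,j} + (k-1)/2 (mod k), where A_{i,j} = min(i-j mod 2k-1, j-i mod 2k-1), and let u be the all-(k-1)/2 vector of length 2k-1. Then the 2k rows of B together with u form a k-ary code in which any two distinct codewords x, y satisfy N(x,y) ≥ k-1 and N(y,x) ≥ k-1. -/

import Mathlib

/-- `NcountN x y` is the number of positions where `x` exceeds `y` (ℕ-valued entries). -/
def NcountN {m : ℕ} (x y : Fin m → ℕ) : ℕ :=
  (Finset.univ.filter fun i => y i < x i).card

/-- Entry `A_{i,j} = min(i-j mod 2k-1, j-i mod 2k-1)` of the near-one-factorization array. -/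
def arrA (k : ℕ) (i j : Fin (2 * k - 1)) : ℕ :=
  min ((i.val + (2 * k - 1) - j.val) % (2 * k - 1))
      ((j.val + (2 * k - 1) - i.val) % (2 * k - 1))

/-- Entry `B_{i,j} = A_{i,j} + (k-1)/2 (mod k)`. -/
def arrB (k : ℕ) (i j : Fin (2 * k - 1)) : ℕ := (arrA k i j + (k - 1) / 2) % k

section Aux

open Finset

private lemma two_torsion {k : ℕ} (hk : 3 ≤ k) [NeZero (2*k-1)] (x : Fin (2*k-1))
    (h : x + x = 0) : x = 0 := by
  have hv : (x.val + x.val) % (2*k-1) = 0 := by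
    have h2 := congrArg Fin.val h
    rw [Fin.add_def] at h2
    simpa using h2
  obtain ⟨c, hc⟩ := Nat.dvd_of_mod_eq_zero hv
  have hx := x.isLt
  have hc2 : c < 2 := by
    by_contra hcge
    push_neg at hcge
    have h5 : (2*k-1) * 2 ≤ (2*k-1) * c := Nat.mul_le_mul_left _ hcge
    omega
  apply Fin.ext
  rw [Fin.val_zero]
  interval_cases c <;> omega

private lemma arrA_eq_min {k : ℕ} (hk : 3 ≤ k) (i j : Fin (2*k-1)) :
    arrA k i j = min ((i - j).val) ((j - i).val) := by
  have hi := i.isLt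
  have hj := j.isLt
  rw [Fin.sub_def, Fin.sub_def]
  unfold arrA
  simp only []
  congr 1 <;> · congr 1; omega

private lemma arrA_val {k : ℕ} (hk : 3 ≤ k) (i j : Fin (2*k-1)) :
    arrA k i j = if (j-i).val ≤ k-1 then (j-i).val else 2*k-1 - (j-i).val := by
  haveI : NeZero (2*k-1) := ⟨by omega⟩
  rw [arrA_eq_min hk]
  have h1 : i - j = -(j - i) := (neg_sub _ _).symm
  rw [h1, Fin.neg_def]
  have hd : (j-i).val < 2*k-1 := (j-i).isLt
  show min ((2*k-1 - (j-i).val) % (2*k-1)) ((j-i).val) = _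
  rcases Nat.eq_zero_or_pos (j - i).val with h0 | h0
  · rw [h0]
    simp
  · rw [Nat.mod_eq_of_lt (by omega), min_def]
    split_ifs <;> omega

private lemma arrB_val {k t : ℕ} (ht : k = 2*t+1) (hk : 3 ≤ k) (i j : Fin (2*k-1)) :
    arrB k i j = if arrA k i j ≤ t then arrA k i j + t else arrA k i j - (t+1) := by
  have hA : arrA k i j ≤ k-1 := by
    rw [arrA_val hk]
    have := (j-i).isLt
    split_ifs <;> omega
  unfold arrB
  have htt : (k-1)/2 = t := by omega
  rw [htt]
  split_ifs with h
  · exact Nat.mod_eq_of_lt (by omega)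
  · rw [Nat.mod_eq_sub_mod (by omega), Nat.mod_eq_of_lt (by omega)]
    omega

private lemma arrB_classify {k t : ℕ} (ht : k = 2*t+1) (hk : 3 ≤ k) (i j : Fin (2*k-1)) :
    (arrB k i j < t ↔ (t+1 ≤ (j-i).val ∧ (j-i).val ≤ k+t-1)) ∧
    (arrB k i j = t ↔ (j-i).val = 0) := by
  have hd := (j-i).isLt
  rw [arrB_val ht hk, arrA_val hk]
  constructor <;> (split_ifs <;> omega)

private lemma arrB_eq_arrB_iff {k t : ℕ} (ht : k = 2*t+1) (hk : 3 ≤ k) (i i' j : Fin (2*k-1)) :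
    arrB k i j = arrB k i' j ↔ arrA k i j = arrA k i' j := by
  have hA : arrA k i j ≤ k-1 := by
    rw [arrA_val hk]; have := (j-i).isLt; split_ifs <;> omega
  have hA' : arrA k i' j ≤ k-1 := by
    rw [arrA_val hk]; have := (j-i').isLt; split_ifs <;> omega
  constructor
  · intro h
    unfold arrB at h
    have h2 : arrA k i j ≡ arrA k i' j [MOD k] :=
      Nat.ModEq.add_right_cancel' ((k-1)/2) h
    unfold Nat.ModEq at h2
    rw [Nat.mod_eq_of_lt (by omega), Nat.mod_eq_of_lt (by omega)] at h2
    exact h2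
  · intro h
    unfold arrB
    rw [h]

private lemma arrA_swap {k : ℕ} (hk : 3 ≤ k) (i i' j : Fin (2*k-1)) :
    arrA k i (i + i' - j) = arrA k i' j := by
  haveI : NeZero (2*k-1) := ⟨by omega⟩
  rw [arrA_eq_min hk, arrA_eq_min hk]
  have h1 : i - (i + i' - j) = j - i' := by abel
  have h2 : (i + i' - j) - i = i' - j := by abel
  rw [h1, h2, min_comm]

private lemma arrB_swap {k : ℕ} (hk : 3 ≤ k) (i i' j : Fin (2*k-1)) :
    arrB k i (i + i' - j) = arrB k i' j := by
  unfold arrB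
  rw [arrA_swap hk]

private lemma tri {m : ℕ} (x y : Fin m → ℕ) :
    NcountN x y + NcountN y x + (Finset.univ.filter fun j => x j = y j).card = m := by
  classical
  unfold NcountN
  have h1 := Finset.card_filter_add_card_filter_not
    (s := (Finset.univ : Finset (Fin m))) (p := fun j => y j < x j)
  have h2 := Finset.card_filter_add_card_filter_not
    (s := Finset.univ.filter fun j => ¬ y j < x j) (p := fun j => x j < y j)
  rw [Finset.filter_filter, Finset.filter_filter] at h2
  have e1 : (Finset.univ.filter fun j => ¬ y j < x j ∧ x j < y j)
      = Finset.univ.filter fun j => x j < y j := by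
    ext j; simp only [Finset.mem_filter, Finset.mem_univ, true_and]; omega
  have e2 : (Finset.univ.filter fun j => ¬ y j < x j ∧ ¬ x j < y j)
      = Finset.univ.filter fun j => x j = y j := by
    ext j; simp only [Finset.mem_filter, Finset.mem_univ, true_and]; omega
  rw [e1, e2] at h2
  rw [Finset.card_univ, Fintype.card_fin] at h1
  have e3 : (Finset.univ.filter fun j => x j < y j).card
      = (Finset.univ.filter fun j => ¬ y j < x j ∧ x j < y j).card := by rw [e1]
  omega

private lemma equal_count_u {k t : ℕ} (ht : k = 2*t+1) (hk : 3 ≤ k) (i : Fin (2*k-1)) :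
    (Finset.univ.filter fun j => arrB k i j = t).card = 1 := by
  haveI : NeZero (2*k-1) := ⟨by omega⟩
  have : (Finset.univ.filter fun j => arrB k i j = t) = {i} := by
    ext j
    simp only [Finset.mem_filter, Finset.mem_univ, true_and, Finset.mem_singleton]
    rw [(arrB_classify ht hk i j).2]
    constructor
    · intro h
      have h0 : j - i = 0 := Fin.ext (by simpa using h)
      exact sub_eq_zero.mp h0
    · rintro rfl
      simp [sub_self]
  rw [this, Finset.card_singleton]

private lemma equal_count_rows {k t : ℕ} (ht : k = 2*t+1) (hk : 3 ≤ k)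
    (i i' : Fin (2*k-1)) (hne : i ≠ i') :
    (Finset.univ.filter fun j => arrB k i j = arrB k i' j).card = 1 := by
  haveI : NeZero (2*k-1) := ⟨by omega⟩
  set a : Fin (2*k-1) := ⟨(k * (i.val + i'.val)) % (2*k-1), Nat.mod_lt _ (by omega)⟩ with ha
  have haa : a + a = i + i' := by
    apply Fin.ext
    rw [Fin.add_def, Fin.add_def]
    show ((k * (i.val + i'.val)) % (2*k-1) + (k * (i.val + i'.val)) % (2*k-1)) % (2*k-1) = _
    rw [← Nat.add_mod]
    have hid : k * (i.val + i'.val) + k * (i.val + i'.val)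
        = (i.val + i'.val) + (i.val + i'.val) * (2*k-1) := by
      have hp : 2*k-1+1 = 2*k := by omega
      calc k * (i.val + i'.val) + k * (i.val + i'.val)
          = (i.val + i'.val) * (2*k) := by ring
        _ = (i.val + i'.val) * (2*k-1+1) := by rw [hp]
        _ = (i.val + i'.val) + (i.val + i'.val) * (2*k-1) := by ring
    rw [hid, Nat.add_mul_mod_self_right]
  have key : ∀ j : Fin (2*k-1), arrB k i j = arrB k i' j ↔ j = a := by
    intro j
    rw [arrB_eq_arrB_iff ht hk]
    constructor
    · intro h
      rw [arrA_val hk, arrA_val hk] at h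
      have hd := (j - i).isLt
      have hd' := (j - i').isLt
      have hdd : (j - i).val = (j - i').val ∨ (j - i).val + (j - i').val = 2*k-1 := by
        split_ifs at h <;> omega
      rcases hdd with hdd | hdd
      · exact absurd (sub_right_inj.mp (Fin.ext hdd)) hne
      · have h0 : (j - i) + (j - i') = 0 := by
          apply Fin.ext
          rw [Fin.add_def]
          show ((j-i).val + (j-i').val) % (2*k-1) = _
          rw [hdd, Nat.mod_self, Fin.val_zero]
        rw [sub_add_sub_comm] at h0
        have hj : j + j = i + i' := sub_eq_zero.mp h0
        have h1 : (j - a) + (j - a) = 0 := by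
          rw [sub_add_sub_comm, hj, ← haa, sub_self]
        exact sub_eq_zero.mp (two_torsion hk _ h1)
    · rintro rfl
      rw [arrA_eq_min hk, arrA_eq_min hk]
      have h1 : i - a = a - i' := by
        rw [sub_eq_sub_iff_add_eq_add]
        exact haa.symm.trans (add_comm _ _)
      have h2 : a - i = i' - a := by
        rw [sub_eq_sub_iff_add_eq_add]
        exact haa.trans (add_comm _ _)
      rw [h1, h2, min_comm]
  rw [Finset.card_eq_one]
  refine ⟨a, ?_⟩
  ext j
  simp only [Finset.mem_filter, Finset.mem_univ, true_and, Finset.mem_singleton]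
  exact key j

private lemma N_sym {k : ℕ} (hk : 3 ≤ k) (i i' : Fin (2*k-1)) :
    NcountN (arrB k i) (arrB k i') = NcountN (arrB k i') (arrB k i) := by
  haveI : NeZero (2*k-1) := ⟨by omega⟩
  unfold NcountN
  apply Finset.card_equiv (Equiv.subLeft (i + i'))
  intro j
  simp only [Finset.mem_filter, Finset.mem_univ, true_and, Equiv.subLeft_apply]
  have e1 : arrB k i ((i + i') - j) = arrB k i' j := arrB_swap hk i i' j
  have e2 : arrB k i' ((i + i') - j) = arrB k i j := by
    rw [add_comm i i']; exact arrB_swap hk i' i j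
  rw [e1, e2]

private lemma count_lt {k t : ℕ} (ht : k = 2*t+1) (hk : 3 ≤ k) (i : Fin (2*k-1)) :
    (Finset.univ.filter fun j => arrB k i j < t).card = k - 1 := by
  haveI : NeZero (2*k-1) := ⟨by omega⟩
  have step1 : (Finset.univ.filter fun j => arrB k i j < t)
      = Finset.univ.filter fun j : Fin (2*k-1) => t+1 ≤ (j - i).val ∧ (j - i).val ≤ k+t-1 :=
    Finset.filter_congr (fun j _ => by rw [(arrB_classify ht hk i j).1])
  rw [step1]
  have step2 : (Finset.univ.filter fun j : Fin (2*k-1) =>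
        t+1 ≤ (j - i).val ∧ (j - i).val ≤ k+t-1).card
      = (Finset.univ.filter fun x : Fin (2*k-1) => t+1 ≤ x.val ∧ x.val ≤ k+t-1).card := by
    apply Finset.card_equiv (Equiv.subRight i)
    intro j
    simp only [Finset.mem_filter, Finset.mem_univ, true_and, Equiv.subRight_apply]
  rw [step2]
  have step3 : (Finset.univ.filter fun x : Fin (2*k-1) => t+1 ≤ x.val ∧ x.val ≤ k+t-1).card
      = (Finset.Icc (t+1) (k+t-1)).card := by
    apply Finset.card_nbij' (fun x => x.val) (fun v => ⟨v % (2*k-1), Nat.mod_lt _ (by omega)⟩)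
    · intro x hx
      simp only [Finset.mem_coe, Finset.mem_filter, Finset.mem_univ, true_and] at hx
      simp only [Finset.mem_coe, Finset.mem_Icc]
      omega
    · intro v hv
      simp only [Finset.mem_coe, Finset.mem_Icc] at hv
      simp only [Finset.mem_coe, Finset.mem_filter, Finset.mem_univ, true_and]
      rw [Nat.mod_eq_of_lt (by omega)]
      omega
    · intro x hx
      apply Fin.ext
      simp [Nat.mod_eq_of_lt x.isLt]
    · intro v hv
      simp only [Finset.mem_coe, Finset.mem_Icc] at hv
      simp only []
      rw [Nat.mod_eq_of_lt (by omega)]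
  rw [step3, Nat.card_Icc]
  omega

end Aux

/-- For odd `k ≥ 3`, the rows of `B` together with the all-`(k-1)/2` vector form a
`k`-ary `(k-2)`-EC-AUED code: all distinct codewords satisfy `N ≥ k-1` both ways. -/
theorem stmt12 {k : ℕ} (hk : 3 ≤ k) (hodd : Odd k) :
    ∀ x ∈ insert (fun _ : Fin (2 * k - 1) => (k - 1) / 2)
        {c : Fin (2 * k - 1) → ℕ | ∃ i, c = arrB k i},
      ∀ y ∈ insert (fun _ : Fin (2 * k - 1) => (k - 1) / 2)
        {c : Fin (2 * k - 1) → ℕ | ∃ i, c = arrB k i},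
      x ≠ y → k - 1 ≤ NcountN x y ∧ k - 1 ≤ NcountN y x := by
  obtain ⟨t, ht⟩ : ∃ t, k = 2*t+1 := by
    obtain ⟨t, h⟩ := hodd; exact ⟨t, by omega⟩
  have hu : (fun _ : Fin (2 * k - 1) => (k - 1) / 2) = fun _ => t := by
    funext _; omega
  have hur : ∀ i : Fin (2*k-1),
      NcountN (fun _ => t) (arrB k i) = k-1 ∧ NcountN (arrB k i) (fun _ => t) = k-1 := by
    intro i
    have h1 : NcountN (fun _ => t) (arrB k i) = k-1 := count_lt ht hk i
    refine ⟨h1, ?_⟩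
    have h3 := tri (fun _ : Fin (2*k-1) => t) (arrB k i)
    have h4 : (Finset.univ.filter fun j => (fun _ : Fin (2*k-1) => t) j = arrB k i j)
        = Finset.univ.filter fun j => arrB k i j = t := by
      ext j
      simp only [Finset.mem_filter, Finset.mem_univ, true_and]
      exact eq_comm
    rw [h1, h4, equal_count_u ht hk i] at h3
    omega
  intro x hx y hy hxy
  rcases Set.mem_insert_iff.mp hx with hx | ⟨i, rfl⟩
  · rcases Set.mem_insert_iff.mp hy with hy | ⟨i, rfl⟩
    · exact absurd (hx.trans hy.symm) hxy
    · rw [hx, hu]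
      have := hur i
      omega
  · rcases Set.mem_insert_iff.mp hy with hy | ⟨i', rfl⟩
    · rw [hy, hu]
      have := hur i
      omega
    · have hne : i ≠ i' := fun h => hxy (by rw [h])
      have hs := N_sym hk i i'
      have htr := tri (arrB k i) (arrB k i')
      have heq := equal_count_rows ht hk i i' hne
      omega
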